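/- Let f = (f_j)_{j<n} and h = (h_j)_{j<k} be tuples of functions from a set I to a set M, and let fh denote the concatenated tuple of length n + k. Then π(h) is a regular subalgebra of π(fh): whenever a family of members of π(h) has a least upper bound within the ordered set π(h), that set is also a least upper bound of the family within the ordered set π(fh). -/

import Mathlib

/-- `𝒜` is a field of sets on `α`: it contains `∅` and `α` and is closed under finite unions,
finite intersections and complements. -/
def IsSetField {α : Type*} (𝒜 : Set (Set α)) : Prop :=
  ∅ ∈ 𝒜 ∧ Set.univ ∈ 𝒜 ∧ (∀ A ∈ 𝒜, ∀ B ∈ 𝒜, A ∪ B ∈ 𝒜) ∧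
    (∀ A ∈ 𝒜, ∀ B ∈ 𝒜, A ∩ B ∈ 𝒜) ∧ (∀ A ∈ 𝒜, Aᶜ ∈ 𝒜)

/-- The field of sets on `α` generated by the family `G`. -/
def genSetField {α : Type*} (G : Set (Set α)) : Set (Set α) :=
  ⋂₀ {𝒜 | IsSetField 𝒜 ∧ G ⊆ 𝒜}

/-- The finite–cofinite field of sets on `M`. -/
def finCofin (M : Type*) : Set (Set M) :=
  {A : Set M | A.Finite ∨ Aᶜ.Finite}

/-- The `n`-th product of the finite–cofinite field on `M`: the field of sets on `M^n`
generated by products of members of the finite–cofinite field. -/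
def prodFinCofin (M : Type*) (n : ℕ) : Set (Set (Fin n → M)) :=
  genSetField {S : Set (Fin n → M) |
    ∃ A : Fin n → Set M, (∀ i, A i ∈ finCofin M) ∧ S = {x | ∀ i, x i ∈ A i}}

/-- The Boolean algebra (field of sets on `I`) generated by a tuple of functions from `I`
to `M`, viewed as a single function `f : I → M^n`. -/
def pialg {I M : Type*} {n : ℕ} (f : I → Fin n → M) : Set (Set I) :=
  {S : Set I | ∃ A ∈ prodFinCofin M n, S = f ⁻¹' A}

/-- `C` is a least upper bound of the family `𝒯` within the subalgebra `S` of the power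
set of `I` (ordered by inclusion). -/
def LubIn {I : Type*} (S 𝒯 : Set (Set I)) (C : Set I) : Prop :=
  C ∈ S ∧ (∀ T ∈ 𝒯, T ⊆ C) ∧ ∀ U ∈ S, (∀ T ∈ 𝒯, T ⊆ U) → C ⊆ U

lemma subset_genSetField {α : Type*} (G : Set (Set α)) : G ⊆ genSetField G := by
  intro s hs
  exact fun 𝒜 h𝒜 => h𝒜.2 hs

lemma genSetField_subset {α : Type*} {G 𝒜 : Set (Set α)} (h1 : IsSetField 𝒜) (h2 : G ⊆ 𝒜) :
    genSetField G ⊆ 𝒜 :=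
  fun s hs => hs 𝒜 ⟨h1, h2⟩

lemma isSetField_genSetField {α : Type*} (G : Set (Set α)) : IsSetField (genSetField G) := by
  refine ⟨?_, ?_, ?_, ?_, ?_⟩
  · exact fun 𝒜 h𝒜 => h𝒜.1.1
  · exact fun 𝒜 h𝒜 => h𝒜.1.2.1
  · exact fun A hA B hB 𝒜 h𝒜 => h𝒜.1.2.2.1 A (hA 𝒜 h𝒜) B (hB 𝒜 h𝒜)
  · exact fun A hA B hB 𝒜 h𝒜 => h𝒜.1.2.2.2.1 A (hA 𝒜 h𝒜) B (hB 𝒜 h𝒜)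
  · exact fun A hA 𝒜 h𝒜 => h𝒜.1.2.2.2.2 A (hA 𝒜 h𝒜)

/-- Pulling back along the projection onto the last `k` coordinates preserves the
product finite–cofinite field. -/
lemma preimage_natAdd_mem_prodFinCofin {M : Type*} {n k : ℕ} :
    ∀ A ∈ prodFinCofin M k,
      (fun z : Fin (n + k) → M => fun i => z (Fin.natAdd n i)) ⁻¹' A ∈ prodFinCofin M (n + k) := by
  set p : (Fin (n + k) → M) → (Fin k → M) := fun z => fun i => z (Fin.natAdd n i)
  have main : prodFinCofin M k ⊆ {A | p ⁻¹' A ∈ prodFinCofin M (n + k)} := by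
    apply genSetField_subset
    · obtain ⟨h0, h1, h2, h3, h4⟩ := isSetField_genSetField
        {S : Set (Fin (n+k) → M) | ∃ A : Fin (n+k) → Set M,
          (∀ i, A i ∈ finCofin M) ∧ S = {x | ∀ i, x i ∈ A i}}
      refine ⟨?_, ?_, ?_, ?_, ?_⟩
      · simpa [Set.preimage_empty, prodFinCofin] using h0
      · simpa [Set.preimage_univ, prodFinCofin] using h1
      · intro A hA B hB
        have := h2 _ hA _ hB
        simpa [Set.preimage_union, prodFinCofin] using this
      · intro A hA B hB
        have := h3 _ hA _ hB
        simpa [Set.preimage_inter, prodFinCofin] using this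
      · intro A hA
        have := h4 _ hA
        simpa [Set.preimage_compl, prodFinCofin] using this
    · rintro S ⟨A, hA, rfl⟩
      refine subset_genSetField _ ⟨Fin.append (fun _ : Fin n => (Set.univ : Set M)) A, ?_, ?_⟩
      · intro i
        refine Fin.addCases (fun i => ?_) (fun i => ?_) i
        · rw [Fin.append_left]
          exact Or.inr (by simp)
        · rw [Fin.append_right]
          exact hA i
      · ext z
        simp only [Set.mem_preimage, Set.mem_setOf_eq]
        constructor
        · intro hz j
          refine Fin.addCases (fun i => ?_) (fun i => ?_) j
          · rw [Fin.append_left]; trivial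
          · rw [Fin.append_right]; exact hz i
        · intro hz i
          have := hz (Fin.natAdd n i)
          rwa [Fin.append_right] at this
  exact fun A hA => main hA

/-- `π(h)` is a regular subalgebra of `π(fh)`, where `fh` is the concatenated tuple. -/
theorem pialg_regular_in_pialg_append
    {I M : Type*} {n k : ℕ} (f : Fin n → I → M) (h : Fin k → I → M) :
    ∀ 𝒯 ⊆ pialg (fun j i => h i j), ∀ C : Set I,
      LubIn (pialg (fun j i => h i j)) 𝒯 C →
      LubIn (pialg (fun j => Fin.append (fun i => f i j) (fun i => h i j))) 𝒯 C := by
  intro 𝒯 h𝒯 C hC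
  obtain ⟨hCmem, hub, hleast⟩ := hC
  set g : I → Fin k → M := fun j i => h i j with hg
  obtain ⟨A, hA, hCA⟩ := hCmem
  have key : C ⊆ ⋃₀ 𝒯 := by
    intro x hx
    by_contra hxn
    have hxn' : ∀ T ∈ 𝒯, x ∉ T := by
      intro T hT hxT
      exact hxn ⟨T, hT, hxT⟩
    -- the fiber of g over g x
    set Wset : Set (Fin k → M) := {z | ∀ i, z i ∈ ({g x i} : Set M)} with hWset
    have hWgen : Wset ∈ prodFinCofin M k :=
      subset_genSetField _ ⟨fun i => {g x i}, fun i => Or.inl (Set.finite_singleton _), rfl⟩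
    obtain ⟨_, _, _, hinter, hcompl⟩ := isSetField_genSetField
      {S : Set (Fin k → M) | ∃ B : Fin k → Set M,
        (∀ i, B i ∈ finCofin M) ∧ S = {x | ∀ i, x i ∈ B i}}
    have hU : C ∩ (g ⁻¹' Wset)ᶜ ∈ pialg g := by
      refine ⟨A ∩ Wsetᶜ, hinter _ hA _ (hcompl _ hWgen), ?_⟩
      rw [hCA, Set.preimage_inter, Set.preimage_compl]
    have hsub : C ⊆ C ∩ (g ⁻¹' Wset)ᶜ := by
      apply hleast _ hU
      intro T hT
      refine Set.subset_inter (hub T hT) ?_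
      intro i1 hi1
      simp only [Set.mem_compl_iff, Set.mem_preimage]
      intro hi1W
      have hgeq : g i1 = g x := funext fun i => hi1W i
      obtain ⟨B, _, hTB⟩ := h𝒯 hT
      have : g i1 ∈ B := by rw [hTB] at hi1; exact hi1
      rw [hgeq] at this
      have : x ∈ T := by rw [hTB]; exact this
      exact hxn' T hT this
    have hxW : x ∈ g ⁻¹' Wset := fun i => rfl
    exact (hsub hx).2 hxW
  refine ⟨?_, hub, fun U _ hUub => key.trans (Set.sUnion_subset hUub)⟩
  -- C belongs to the bigger algebra
  refine ⟨(fun z : Fin (n + k) → M => fun i => z (Fin.natAdd n i)) ⁻¹' A,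
    preimage_natAdd_mem_prodFinCofin A hA, ?_⟩
  rw [hCA]
  ext j
  simp only [Set.mem_preimage, Fin.append_right]
  exact Iff.rfl
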